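/- arXiv:2508.00631 — 9 statements merged into one kernel-verified Lean document; each statement's English description precedes it below -/
import Mathlib

section
/- If β is a critical point of a polynomial p with multiplicity l (i.e., p'(z) = (z-β)^l h(z) with h(β) ≠ 0) such that p(β) ≠ 0, then β is a fixed point of Halley's method H_p with multiplier 1 + 2/l; in particular β is a repelling fixed point. -/
noncomputable def halley (p : ℂ → ℂ) (z : ℂ) : ℂ :=
  z - 2 * p z * deriv p z / (2 * (deriv p z) ^ 2 - p z * deriv (deriv p) z)

theorem critical_point_repelling_fixed_point (p h : Polynomial ℂ) (β : ℂ) (l : ℕ) (hl : 1 ≤ l)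
    (hfac : p.derivative = (Polynomial.X - Polynomial.C β) ^ l * h)
    (hh : h.eval β ≠ 0) (hpβ : p.eval β ≠ 0) :
    halley (fun z => p.eval z) β = β ∧
    deriv (halley (fun z => p.eval z)) β = 1 + 2 / (l : ℂ) ∧
    1 < ‖deriv (halley (fun z => p.eval z)) β‖ := by
  obtain ⟨m, rfl⟩ : ∃ m, l = m + 1 := ⟨l - 1, (Nat.succ_pred_eq_of_pos hl).symm⟩
  have hd1 : deriv (fun z => p.eval z) = fun z => p.derivative.eval z :=
    funext fun z => Polynomial.deriv p
  have hd2 : deriv (deriv (fun z => p.eval z)) = fun z => p.derivative.derivative.eval z := by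
    rw [hd1]; exact funext fun z => Polynomial.deriv _
  have hp'β : p.derivative.eval β = 0 := by
    simp [hfac]
  set A : Polynomial ℂ := 2 * p * h with hA
  set B : Polynomial ℂ := 2 * (Polynomial.X - Polynomial.C β) ^ (m + 2) * h ^ 2
      - p * (Polynomial.C ((m : ℂ) + 1) * h
        + (Polynomial.X - Polynomial.C β) * h.derivative) with hB
  have hNeq : 2 * p * p.derivative = (Polynomial.X - Polynomial.C β) ^ (m + 1) * A := by
    rw [hfac, hA]; ring
  have hp'' : p.derivative.derivative
      = (Polynomial.X - Polynomial.C β) ^ m * (Polynomial.C ((m : ℂ) + 1) * h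
        + (Polynomial.X - Polynomial.C β) * h.derivative) := by
    rw [hfac, Polynomial.derivative_mul, Polynomial.derivative_pow]
    simp only [Polynomial.derivative_sub, Polynomial.derivative_X, Polynomial.derivative_C,
      sub_zero, mul_one, Nat.add_sub_cancel, Nat.cast_add, Nat.cast_one, Polynomial.C_add,
      Polynomial.C_1]
    ring
  have hDeq : 2 * p.derivative ^ 2 - p * p.derivative.derivative
      = (Polynomial.X - Polynomial.C β) ^ m * B := by
    rw [hp'', hfac, hB]; ring
  have hBβ : B.eval β = -((m : ℂ) + 1) * (p.eval β * h.eval β) := by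
    simp [hB]; ring
  have hm1 : ((m : ℂ) + 1) ≠ 0 := Nat.cast_add_one_ne_zero m
  have hBβne : B.eval β ≠ 0 := by
    rw [hBβ]
    exact mul_ne_zero (neg_ne_zero.mpr hm1) (mul_ne_zero hpβ hh)
  have hfix : halley (fun z => p.eval z) β = β := by
    simp [halley, hd1, hd2, hp'β]
  have hev : halley (fun z => p.eval z) =ᶠ[nhds β]
      fun z => z - (z - β) * A.eval z / B.eval z := by
    have hcont : ContinuousAt (fun z => B.eval z) β := B.continuousAt
    filter_upwards [hcont.eventually_ne hBβne] with z hz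
    rcases eq_or_ne z β with rfl | hzβ
    · simpa using hfix
    · simp only [halley]
      rw [hd2]
      simp only [hd1]
      have e1 : 2 * p.eval z * p.derivative.eval z = (z - β) ^ (m + 1) * A.eval z := by
        have := congrArg (Polynomial.eval z) hNeq; simpa using this
      have e2 : 2 * p.derivative.eval z ^ 2 - p.eval z * p.derivative.derivative.eval z
          = (z - β) ^ m * B.eval z := by
        have := congrArg (Polynomial.eval z) hDeq; simpa using this
      rw [e1, e2]
      have hzβ' : z - β ≠ 0 := sub_ne_zero.mpr hzβ
      congr 1
      field_simp
      ring
  have hderiv : deriv (halley (fun z => p.eval z)) β = 1 + 2 / ((m : ℂ) + 1) := by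
    rw [hev.deriv_eq]
    have h1 : HasDerivAt (fun z : ℂ => (z - β) * A.eval z) (A.eval β) β := by
      have := ((hasDerivAt_id β).sub_const β).fun_mul (A.hasDerivAt β)
      simpa using this
    have h2 : HasDerivAt (fun z : ℂ => (z - β) * A.eval z / B.eval z)
        (A.eval β / B.eval β) β := by
      have h3 := h1.fun_div (B.hasDerivAt β) hBβne
      refine h3.congr_deriv ?_
      field_simp
      ring
    have h4 : HasDerivAt (fun z : ℂ => z - (z - β) * A.eval z / B.eval z)
        (1 - A.eval β / B.eval β) β := (hasDerivAt_id β).sub h2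
    rw [h4.deriv]
    have hAβ : A.eval β = 2 * p.eval β * h.eval β := by simp [hA]; try ring
    have hab : p.eval β * h.eval β ≠ 0 := mul_ne_zero hpβ hh
    rw [hAβ, hBβ,
      show (2 : ℂ) * p.eval β * h.eval β = 2 * (p.eval β * h.eval β) from by ring,
      mul_div_mul_right _ _ hab, div_neg, sub_neg_eq_add]
  refine ⟨hfix, ?_, ?_⟩
  · rw [hderiv]; push_cast; ring
  · rw [hderiv]
    have hcast : (1 : ℂ) + 2 / ((m : ℂ) + 1) = ((1 + 2 / ((m : ℝ) + 1) : ℝ) : ℂ) := by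
      push_cast; ring
    rw [hcast, Complex.norm_real, Real.norm_eq_abs]
    have hpos : 0 < 2 / ((m : ℝ) + 1) := by positivity
    rw [abs_of_pos (by linarith)]
    linarith
end

section
/- For any polynomial p, any nonzero constant c and any affine map T(z) = αz + β with α ≠ 0, if q(z) = c·p(T(z)), then H_q(z) = T⁻¹(H_p(T(z))) wherever both sides are defined (the Scaling property of Halley's method). -/
lemma deriv_poly (p : Polynomial ℂ) :
    deriv (fun w => p.eval w) = fun w => p.derivative.eval w := by
  funext w; exact p.deriv

theorem halley_scaling_property (p q : Polynomial ℂ) (c α β : ℂ) (hc : c ≠ 0) (hα : α ≠ 0)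
    (hq : q = Polynomial.C c * p.comp (Polynomial.C α * Polynomial.X + Polynomial.C β)) :
    ∀ z : ℂ,
      2 * (q.derivative.eval z) ^ 2 - q.eval z * q.derivative.derivative.eval z ≠ 0 →
      2 * (p.derivative.eval (α * z + β)) ^ 2 -
        p.eval (α * z + β) * p.derivative.derivative.eval (α * z + β) ≠ 0 →
      halley (fun w => q.eval w) z =
        (halley (fun w => p.eval w) (α * z + β) - β) / α := by
  intro z hq0 hp0
  have hqd : q.derivative = Polynomial.C (c * α) *
      p.derivative.comp (Polynomial.C α * Polynomial.X + Polynomial.C β) := by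
    subst hq
    simp [Polynomial.derivative_comp]
    ring
  have hqdd : q.derivative.derivative = Polynomial.C (c * α * α) *
      (p.derivative.derivative).comp (Polynomial.C α * Polynomial.X + Polynomial.C β) := by
    rw [hqd]
    simp [Polynomial.derivative_comp]
    ring
  have he0 : q.eval z = c * p.eval (α * z + β) := by
    simp [hq, Polynomial.eval_comp]
  have he1 : q.derivative.eval z = c * α * p.derivative.eval (α * z + β) := by
    simp [hqd, Polynomial.eval_comp]
  have he2 : q.derivative.derivative.eval z
      = c * α * α * p.derivative.derivative.eval (α * z + β) := by
    simp [hqdd, Polynomial.eval_comp]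
  simp only [halley, deriv_poly, he0, he1, he2] at *
  set P := p.eval (α * z + β)
  set P1 := p.derivative.eval (α * z + β)
  set P2 := p.derivative.derivative.eval (α * z + β)
  have key : 2 * (c * α * P1) ^ 2 - c * P * (c * α * α * P2)
      = c ^ 2 * α ^ 2 * (2 * P1 ^ 2 - P * P2) := by ring
  rw [key]
  field_simp
  ring
end

section
/- For p(z) = (z²-1)^k with k ≥ 2, all free critical points of H_p (solutions of (4k²-1)z⁴ - 6z² + 3 = 0) and all poles of H_p (solutions of (2k+1)z² + 1 = 0) are non-real complex numbers. -/
theorem free_critical_points_and_poles_nonreal (k : ℕ) (hk : 2 ≤ k) :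
    ∀ z : ℂ,
      ((4 * (k : ℂ) ^ 2 - 1) * z ^ 4 - 6 * z ^ 2 + 3 = 0 ∨
        (2 * (k : ℂ) + 1) * z ^ 2 + 1 = 0) → z.im ≠ 0 := by
  intro z h him
  have hz : z = ((z.re : ℝ) : ℂ) := by
    apply Complex.ext <;> simp [him]
  set x : ℝ := z.re
  have hk' : (2 : ℝ) ≤ (k : ℝ) := by exact_mod_cast hk
  rcases h with h | h
  · rw [hz] at h
    have h' : (((4 * (k : ℝ) ^ 2 - 1) * x ^ 4 - 6 * x ^ 2 + 3 : ℝ) : ℂ) = 0 := by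
      push_cast
      convert h using 2
    rw [Complex.ofReal_eq_zero] at h'
    nlinarith [sq_nonneg x, sq_nonneg (x ^ 2), sq_nonneg ((k : ℝ) * x ^ 2 - 1),
      sq_nonneg (5 * x ^ 2 - 1), sq_nonneg ((k : ℝ) - 2)]
  · rw [hz] at h
    have h' : (((2 * (k : ℝ) + 1) * x ^ 2 + 1 : ℝ) : ℂ) = 0 := by
      push_cast
      convert h using 2
    rw [Complex.ofReal_eq_zero] at h'
    nlinarith [sq_nonneg x]
end

section
/- Let p(z) = (z-1)^k (z + m/k)^m with k, m positive integers. Then H_p(z) = z(k(k+m-1)z² + 2(k-m)z + 3m)/(k(k+m+1)z² + m). Moreover, H_p maps the imaginary axis into the imaginary axis (i.e., for every real y with iy not a pole, H_p(iy) is purely imaginary) if and only if k = m. -/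
lemma halley_hda (a b : ℕ) (c z : ℂ) :
    HasDerivAt (fun z : ℂ => (z - 1) ^ a * (z + c) ^ b)
      ((a:ℂ) * (z-1)^(a-1) * (z+c)^b + (b:ℂ) * (z-1)^a * (z+c)^(b-1)) z := by
  have h1 : HasDerivAt (fun z : ℂ => (z - 1) ^ a) ((a:ℂ) * (z-1)^(a-1)) z := by
    have := (hasDerivAt_pow a (z-1)).comp z ((hasDerivAt_id z).sub_const 1)
    simpa [Function.comp_def] using this
  have h2 : HasDerivAt (fun z : ℂ => (z + c) ^ b) ((b:ℂ) * (z+c)^(b-1)) z := by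
    have := (hasDerivAt_pow b (z+c)).comp z ((hasDerivAt_id z).add_const c)
    simpa [Function.comp_def] using this
  have := h1.mul h2
  refine this.congr_deriv ?_
  ring

set_option maxHeartbeats 1600000 in
lemma halley_factorization (k' m' : ℕ) (c z : ℂ) :
    2 * (((k':ℂ)+1) * (z-1)^k' * (z+c)^(m'+1) + ((m':ℂ)+1) * (z-1)^(k'+1) * (z+c)^m')^2
      - ((z-1)^(k'+1) * (z+c)^(m'+1)) *
        (((k':ℂ)+1) * ((k':ℂ) * (z-1)^(k'-1) * (z+c)^(m'+1) + ((m':ℂ)+1) * (z-1)^k' * (z+c)^m')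
          + ((m':ℂ)+1) * (((k':ℂ)+1) * (z-1)^k' * (z+c)^m' + (m':ℂ) * (z-1)^(k'+1) * (z+c)^(m'-1)))
    = (z-1)^(2*k') * (z+c)^(2*m') *
        (((k':ℂ)+1)*((k':ℂ)+2)*(z+c)^2 + ((m':ℂ)+1)*((m':ℂ)+2)*(z-1)^2
          + 2*((k':ℂ)+1)*((m':ℂ)+1)*(z-1)*(z+c)) := by
  rcases k' with _ | a <;> rcases m' with _ | b <;>
    simp only [two_mul, pow_add, pow_succ, Nat.zero_sub, Nat.succ_sub_one, pow_zero,
      Nat.cast_succ, Nat.cast_zero] <;> ring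

theorem halley_two_roots_imaginary_axis (k m : ℕ) (hk : 1 ≤ k) (hm : 1 ≤ m)
    (p : ℂ → ℂ) (hp : ∀ z, p z = (z - 1) ^ k * (z + (m : ℂ) / (k : ℂ)) ^ m) :
    (∀ z : ℂ, 2 * (deriv p z) ^ 2 - p z * deriv (deriv p) z ≠ 0 →
      halley p z =
        z * ((k : ℂ) * ((k : ℂ) + (m : ℂ) - 1) * z ^ 2 + 2 * ((k : ℂ) - (m : ℂ)) * z + 3 * (m : ℂ)) /
          ((k : ℂ) * ((k : ℂ) + (m : ℂ) + 1) * z ^ 2 + (m : ℂ))) ∧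
    ((∀ y : ℝ,
        2 * (deriv p (Complex.I * y)) ^ 2 -
          p (Complex.I * y) * deriv (deriv p) (Complex.I * y) ≠ 0 →
        (halley p (Complex.I * y)).re = 0) ↔ k = m) := by
  obtain ⟨k', rfl⟩ : ∃ k', k = k' + 1 := ⟨k - 1, (Nat.succ_pred_eq_of_pos hk).symm⟩
  obtain ⟨m', rfl⟩ : ∃ m', m = m' + 1 := ⟨m - 1, (Nat.succ_pred_eq_of_pos hm).symm⟩
  obtain ⟨c, hc⟩ : ∃ c : ℂ, c = ((m'+1 : ℕ) : ℂ) / ((k'+1 : ℕ) : ℂ) := ⟨_, rfl⟩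
  simp only [← hc] at hp
  have hk0 : ((k':ℂ) + 1) ≠ 0 := by
    intro h
    have : ((k' + 1 : ℕ) : ℂ) = 0 := by push_cast; linear_combination h
    exact (Nat.cast_ne_zero.2 (Nat.succ_ne_zero k')) this
  have hKM0 : ((k':ℂ) + 1) + ((m':ℂ) + 1) ≠ 0 := by
    intro h
    have : ((k' + m' + 2 : ℕ) : ℂ) = 0 := by push_cast; linear_combination h
    exact (Nat.cast_ne_zero.2 (by omega)) this
  have hkc : ((k':ℂ)+1) * c = (m':ℂ) + 1 := by
    rw [hc]; push_cast; field_simp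
  have hpe : p = fun z => (z - 1) ^ (k'+1) * (z + c) ^ (m'+1) := funext hp
  have hpd : deriv p = fun z => ((k':ℂ)+1) * (z-1)^k' * (z+c)^(m'+1)
      + ((m':ℂ)+1) * (z-1)^(k'+1) * (z+c)^m' := by
    funext z
    rw [hpe]
    have := (halley_hda (k'+1) (m'+1) c z).deriv
    simpa using this
  have hpdd : deriv (deriv p) = fun z =>
      ((k':ℂ)+1) * ((k':ℂ) * (z-1)^(k'-1) * (z+c)^(m'+1) + ((m':ℂ)+1) * (z-1)^k' * (z+c)^m')
        + ((m':ℂ)+1) * (((k':ℂ)+1) * (z-1)^k' * (z+c)^m' + (m':ℂ) * (z-1)^(k'+1) * (z+c)^(m'-1)) := by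
    funext z
    rw [hpd]
    have hfun : (fun z : ℂ => ((k':ℂ)+1) * (z-1)^k' * (z+c)^(m'+1)
        + ((m':ℂ)+1) * (z-1)^(k'+1) * (z+c)^m')
        = (fun z : ℂ => ((k':ℂ)+1) * ((z-1)^k' * (z+c)^(m'+1))
        + ((m':ℂ)+1) * ((z-1)^(k'+1) * (z+c)^m')) := by
      funext z; ring
    rw [hfun]
    have h1 := (halley_hda k' (m'+1) c z).const_mul ((k':ℂ)+1)
    have h2 := (halley_hda (k'+1) m' c z).const_mul ((m':ℂ)+1)
    refine (h1.add h2).deriv.trans ?_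
    simp only [Nat.add_sub_cancel]
    push_cast
    ring
  have hfac : ∀ z : ℂ, 2 * (deriv p z) ^ 2 - p z * deriv (deriv p) z
      = (z-1)^(2*k') * (z+c)^(2*m') *
        (((k':ℂ)+1)*((k':ℂ)+2)*(z+c)^2 + ((m':ℂ)+1)*((m':ℂ)+2)*(z-1)^2
          + 2*((k':ℂ)+1)*((m':ℂ)+1)*(z-1)*(z+c)) := by
    intro z
    rw [hpdd, hpd, hpe]
    beta_reduce
    exact halley_factorization k' m' c z
  have hnum : ∀ z : ℂ, 2 * p z * deriv p z
      = (z-1)^(2*k') * (z+c)^(2*m') *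
        (2 * (z-1) * (z+c) * ((((k':ℂ)+1) + ((m':ℂ)+1)) * z)) := by
    intro z
    rw [hpd, hpe]
    beta_reduce
    linear_combination (2 * (z-1)^(2*k'+1) * (z+c)^(2*m'+1)) * hkc
  -- Q = ((K+M)/K) Dq
  have hQD : ∀ z : ℂ,
      ((k':ℂ)+1) * (((k':ℂ)+1)*((k':ℂ)+2)*(z+c)^2 + ((m':ℂ)+1)*((m':ℂ)+2)*(z-1)^2
          + 2*((k':ℂ)+1)*((m':ℂ)+1)*(z-1)*(z+c))
      = (((k':ℂ)+1) + ((m':ℂ)+1)) *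
        (((k':ℂ)+1)*(((k':ℂ)+1)+((m':ℂ)+1)+1)*z^2 + ((m':ℂ)+1)) := by
    intro z
    rw [hc]
    push_cast
    field_simp
    ring
  -- main identity with nonvanishing denominator
  have hmain : ∀ z : ℂ, 2 * (deriv p z) ^ 2 - p z * deriv (deriv p) z ≠ 0 →
      (halley p z = z * (((k':ℂ)+1)*((((k':ℂ)+1)+((m':ℂ)+1))-1)*z^2
          + 2*(((k':ℂ)+1)-((m':ℂ)+1))*z + 3*((m':ℂ)+1)) /
        (((k':ℂ)+1)*(((k':ℂ)+1)+((m':ℂ)+1)+1)*z^2 + ((m':ℂ)+1))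
        ∧ (((k':ℂ)+1)*(((k':ℂ)+1)+((m':ℂ)+1)+1)*z^2 + ((m':ℂ)+1)) ≠ 0) := by
    intro z hD
    have hD' := hD
    rw [hfac z] at hD'
    have hE : (z-1)^(2*k') * (z+c)^(2*m') ≠ 0 := fun h => hD' (by rw [h, zero_mul])
    have hQ : (((k':ℂ)+1)*((k':ℂ)+2)*(z+c)^2 + ((m':ℂ)+1)*((m':ℂ)+2)*(z-1)^2
        + 2*((k':ℂ)+1)*((m':ℂ)+1)*(z-1)*(z+c)) ≠ 0 := fun h => hD' (by rw [h, mul_zero])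
    have hDq : (((k':ℂ)+1)*(((k':ℂ)+1)+((m':ℂ)+1)+1)*z^2 + ((m':ℂ)+1)) ≠ 0 := by
      intro h
      have := hQD z
      rw [h, mul_zero] at this
      exact hQ (by
        have := mul_eq_zero.1 this
        rcases this with h1 | h1
        · exact absurd h1 hk0
        · exact h1)
    refine ⟨?_, hDq⟩
    rw [halley, hnum z, hfac z, mul_div_mul_left _ _ hE]
    have h1 : z - (2 * (z-1) * (z+c) * ((((k':ℂ)+1) + ((m':ℂ)+1)) * z)) /
          (((k':ℂ)+1)*((k':ℂ)+2)*(z+c)^2 + ((m':ℂ)+1)*((m':ℂ)+2)*(z-1)^2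
            + 2*((k':ℂ)+1)*((m':ℂ)+1)*(z-1)*(z+c))
        = (z * (((k':ℂ)+1)*((k':ℂ)+2)*(z+c)^2 + ((m':ℂ)+1)*((m':ℂ)+2)*(z-1)^2
            + 2*((k':ℂ)+1)*((m':ℂ)+1)*(z-1)*(z+c))
           - 2 * (z-1) * (z+c) * ((((k':ℂ)+1) + ((m':ℂ)+1)) * z)) /
          (((k':ℂ)+1)*((k':ℂ)+2)*(z+c)^2 + ((m':ℂ)+1)*((m':ℂ)+2)*(z-1)^2
            + 2*((k':ℂ)+1)*((m':ℂ)+1)*(z-1)*(z+c)) := by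
      rw [sub_div, mul_div_cancel_right₀ _ hQ]
    rw [h1]
    rw [show (z * (((k':ℂ)+1)*((k':ℂ)+2)*(z+c)^2 + ((m':ℂ)+1)*((m':ℂ)+2)*(z-1)^2
            + 2*((k':ℂ)+1)*((m':ℂ)+1)*(z-1)*(z+c))
           - 2 * (z-1) * (z+c) * ((((k':ℂ)+1) + ((m':ℂ)+1)) * z)) /
          (((k':ℂ)+1)*((k':ℂ)+2)*(z+c)^2 + ((m':ℂ)+1)*((m':ℂ)+2)*(z-1)^2
            + 2*((k':ℂ)+1)*((m':ℂ)+1)*(z-1)*(z+c))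
        = ((k':ℂ)+1) * (z * (((k':ℂ)+1)*((k':ℂ)+2)*(z+c)^2 + ((m':ℂ)+1)*((m':ℂ)+2)*(z-1)^2
            + 2*((k':ℂ)+1)*((m':ℂ)+1)*(z-1)*(z+c))
           - 2 * (z-1) * (z+c) * ((((k':ℂ)+1) + ((m':ℂ)+1)) * z)) /
          (((k':ℂ)+1) * (((k':ℂ)+1)*((k':ℂ)+2)*(z+c)^2 + ((m':ℂ)+1)*((m':ℂ)+2)*(z-1)^2
            + 2*((k':ℂ)+1)*((m':ℂ)+1)*(z-1)*(z+c)))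
        from (mul_div_mul_left _ _ hk0).symm]
    rw [hQD z, div_eq_div_iff (mul_ne_zero hKM0 hDq) hDq]
    linear_combination (z * (((k':ℂ)+1)*(((k':ℂ)+1)+((m':ℂ)+1)+1)*z^2 + ((m':ℂ)+1))) * hQD z
      + (2*z*(1-z)*(((k':ℂ)+1) + ((m':ℂ)+1))
         * (((k':ℂ)+1)*(((k':ℂ)+1)+((m':ℂ)+1)+1)*z^2 + ((m':ℂ)+1))) * hkc
  -- real part formula on the imaginary axis
  have hre : ∀ y : ℝ, 2 * (deriv p (Complex.I * y)) ^ 2 -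
        p (Complex.I * y) * deriv (deriv p) (Complex.I * y) ≠ 0 →
      (halley p (Complex.I * y)).re
        = (-(2 * (((k':ℝ)+1) - ((m':ℝ)+1)) * y^2)) /
          (((m':ℝ)+1) - (((k':ℝ)+1)) * (((k':ℝ)+1) + ((m':ℝ)+1) + 1) * y^2) := by
    intro y hD
    obtain ⟨hH, hDq⟩ := hmain (Complex.I * y) hD
    rw [hH]
    have hdq : (((k':ℂ)+1)*(((k':ℂ)+1)+((m':ℂ)+1)+1)*(Complex.I * y)^2 + ((m':ℂ)+1))
        = (((((m':ℝ)+1) - (((k':ℝ)+1)) * (((k':ℝ)+1) + ((m':ℝ)+1) + 1) * y^2 : ℝ)) : ℂ) := by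
      rw [mul_pow, Complex.I_sq]
      push_cast
      ring
    have hw : (Complex.I * y) * (((k':ℂ)+1)*((((k':ℂ)+1)+((m':ℂ)+1))-1)*(Complex.I * y)^2
          + 2*(((k':ℂ)+1)-((m':ℂ)+1))*(Complex.I * y) + 3*((m':ℂ)+1))
        = ((((-(2 * (((k':ℝ)+1) - ((m':ℝ)+1)) * y^2)) : ℝ)) : ℂ)
          + (((y * (3*((m':ℝ)+1) - (((k':ℝ)+1))*(((k':ℝ)+1)+((m':ℝ)+1)-1)*y^2) : ℝ)) : ℂ) * Complex.I := by
      simp only [mul_pow, Complex.I_sq]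
      push_cast
      linear_combination (2*((k':ℂ)-(m':ℂ))*(y:ℂ)^2) * Complex.I_sq
    rw [hw, hdq, Complex.div_ofReal_re]
    simp [← Complex.ofReal_pow]
  constructor
  · intro z hD
    rw [(hmain z hD).1]
    push_cast
    ring
  · constructor
    · intro hall
      have hcr : c = ((((m'+1 : ℕ):ℝ)/((k'+1 : ℕ):ℝ) : ℝ) : ℂ) := by
        rw [hc]; push_cast; norm_num
      have him : c.im = 0 := by rw [hcr]; exact Complex.ofReal_im _
      have hD1 : 2 * (deriv p (Complex.I * ((1:ℝ):ℂ))) ^ 2 -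
          p (Complex.I * ((1:ℝ):ℂ)) * deriv (deriv p) (Complex.I * ((1:ℝ):ℂ)) ≠ 0 := by
        rw [hfac]
        apply mul_ne_zero
        · apply mul_ne_zero <;> apply pow_ne_zero
          · intro h
            have := congrArg Complex.im h
            simp at this
          · intro h
            have := congrArg Complex.im h
            simp [him] at this
        · intro h
          have h2 := hQD (Complex.I * ((1:ℝ):ℂ))
          rw [h, mul_zero] at h2
          have h3 := (mul_eq_zero.1 h2.symm).resolve_left hKM0
          have hdq1 : (((k':ℂ)+1)*(((k':ℂ)+1)+((m':ℂ)+1)+1)*(Complex.I * ((1:ℝ):ℂ))^2 + ((m':ℂ)+1))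
              = (((((m':ℝ)+1) - (((k':ℝ)+1)) * (((k':ℝ)+1) + ((m':ℝ)+1) + 1) : ℝ)) : ℂ) := by
            rw [mul_pow, Complex.I_sq]
            push_cast
            ring
          rw [hdq1] at h3
          have h4 : (((m':ℝ)+1) - (((k':ℝ)+1)) * (((k':ℝ)+1) + ((m':ℝ)+1) + 1)) = 0 :=
            Complex.ofReal_eq_zero.1 h3
          have hk'0 : (0:ℝ) ≤ (k':ℝ) := Nat.cast_nonneg k'
          have hm'0 : (0:ℝ) ≤ (m':ℝ) := Nat.cast_nonneg m'
          nlinarith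
      have h0 := hall 1 hD1
      rw [hre 1 hD1] at h0
      have hd1 : (((m':ℝ)+1) - (((k':ℝ)+1)) * (((k':ℝ)+1) + ((m':ℝ)+1) + 1) * (1:ℝ)^2) ≠ 0 := by
        have hk'0 : (0:ℝ) ≤ (k':ℝ) := Nat.cast_nonneg k'
        have hm'0 : (0:ℝ) ≤ (m':ℝ) := Nat.cast_nonneg m'
        nlinarith
      have h5 : -(2 * (((k':ℝ)+1) - ((m':ℝ)+1)) * (1:ℝ)^2) = 0 := by
        rcases div_eq_zero_iff.1 h0 with h | h
        · exact h
        · exact absurd h hd1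
      have h6 : (k':ℝ) = (m':ℝ) := by nlinarith [h5]
      have : k' = m' := Nat.cast_injective h6
      omega
    · intro hkm y hD
      have hk'm' : k' = m' := by omega
      subst hk'm'
      rw [hre y hD]
      simp
end

section
/- For p(z) = z^n - 1 with n ≥ 2, H_p(z) = z((n-1)z^n + (n+1))/((n+1)z^n + (n-1)) satisfies H_p(x) < x for every real x > 1, H_p is strictly increasing on (1, ∞), and H_p has no fixed point, zero of H_p', or pole in (1, ∞). Consequently, for every x > 1 the iterates H_p^j(x) converge to 1. -/
theorem halley_unicritical_real_dynamics (n : ℕ) (hn : 2 ≤ n)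
    (f : ℝ → ℝ)
    (hf : ∀ x, f x = x * (((n : ℝ) - 1) * x ^ n + ((n : ℝ) + 1)) /
      (((n : ℝ) + 1) * x ^ n + ((n : ℝ) - 1))) :
    (∀ x : ℝ, 1 < x → f x < x) ∧
    StrictMonoOn f (Set.Ioi 1) ∧
    (∀ x : ℝ, 1 < x →
      f x ≠ x ∧ deriv f x ≠ 0 ∧ ((n : ℝ) + 1) * x ^ n + ((n : ℝ) - 1) ≠ 0) ∧
    (∀ x : ℝ, 1 < x →
      Filter.Tendsto (fun j => f^[j] x) Filter.atTop (nhds 1)) := by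
  have hn2 : (2:ℝ) ≤ (n:ℝ) := by exact_mod_cast hn
  set c : ℝ := (n:ℝ) with hc
  -- denominator positive on [1, ∞)
  have hD : ∀ x : ℝ, 1 ≤ x → 0 < (c + 1) * x ^ n + (c - 1) := by
    intro x hx
    have hp : (1:ℝ) ≤ x ^ n := one_le_pow₀ hx
    nlinarith
  -- f x < x for x > 1
  have hlt : ∀ x : ℝ, 1 < x → f x < x := by
    intro x hx
    rw [hf, div_lt_iff₀ (hD x hx.le)]
    have hp : (1:ℝ) < x ^ n := one_lt_pow₀ hx (by omega)
    nlinarith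
  -- derivative formula
  have hderiv : ∀ x : ℝ, 1 ≤ x →
      HasDerivAt f ((c ^ 2 - 1) * (x ^ n - 1) ^ 2 / ((c + 1) * x ^ n + (c - 1)) ^ 2) x := by
    intro x hx
    have h1 : HasDerivAt (fun y : ℝ => (c - 1) * y ^ n + (c + 1))
        ((c - 1) * ((n:ℝ) * x ^ (n - 1))) x :=
      ((hasDerivAt_pow n x).const_mul (c - 1)).add_const (c + 1)
    have hN : HasDerivAt (fun y : ℝ => y * ((c - 1) * y ^ n + (c + 1)))
        (1 * ((c - 1) * x ^ n + (c + 1)) + x * ((c - 1) * ((n:ℝ) * x ^ (n - 1)))) x :=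
      (hasDerivAt_id x).mul h1
    have hDd : HasDerivAt (fun y : ℝ => (c + 1) * y ^ n + (c - 1))
        ((c + 1) * ((n:ℝ) * x ^ (n - 1))) x :=
      ((hasDerivAt_pow n x).const_mul (c + 1)).add_const (c - 1)
    have hdiv := hN.div hDd (ne_of_gt (hD x hx))
    have hfeq : f = fun y : ℝ => y * ((c - 1) * y ^ n + (c + 1)) /
        ((c + 1) * y ^ n + (c - 1)) := funext hf
    rw [hfeq]
    refine hdiv.congr_deriv ?_
    have hxn : x ^ n = x * x ^ (n - 1) := by
      conv_lhs => rw [show n = (n - 1) + 1 by omega]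
      rw [pow_succ]; ring
    rw [div_eq_div_iff (pow_ne_zero _ (ne_of_gt (hD x hx))) (pow_ne_zero _ (ne_of_gt (hD x hx)))]
    rw [hxn]; ring
  -- strict mono on Ici 1
  have hmono : StrictMonoOn f (Set.Ici 1) := by
    apply strictMonoOn_of_deriv_pos (convex_Ici 1)
    · intro x hx
      exact (hderiv x hx).continuousAt.continuousWithinAt
    · intro x hx
      rw [interior_Ici] at hx
      rw [(hderiv x (le_of_lt hx)).deriv]
      have hp : (1:ℝ) < x ^ n := one_lt_pow₀ hx (by omega)
      have h1 : (0:ℝ) < c ^ 2 - 1 := by nlinarith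
      have h2 : (0:ℝ) < (x ^ n - 1) ^ 2 := pow_pos (by linarith) 2
      have h3 := hD x hx.le
      positivity
  have hf1 : f 1 = 1 := by
    have hne : (c + 1) * (1:ℝ) ^ n + (c - 1) ≠ 0 := (hD 1 le_rfl).ne'
    rw [hf]
    field_simp
    simp only [one_pow]
    rw [div_eq_one_iff_eq (by intro h; linarith)]; ring
  -- f x > 1 for x > 1
  have hgt : ∀ x : ℝ, 1 < x → 1 < f x := by
    intro x hx
    have := hmono (Set.self_mem_Ici) (Set.mem_Ici.mpr hx.le) hx
    rwa [hf1] at this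
  refine ⟨hlt, hmono.mono (Set.Ioi_subset_Ici le_rfl), ?_, ?_⟩
  · intro x hx
    refine ⟨(hlt x hx).ne, ?_, (hD x hx.le).ne'⟩
    rw [(hderiv x hx.le).deriv]
    have hp : (1:ℝ) < x ^ n := one_lt_pow₀ hx (by omega)
    have h1 : (0:ℝ) < c ^ 2 - 1 := by nlinarith
    have h2 : (0:ℝ) < (x ^ n - 1) ^ 2 := pow_pos (by linarith) 2
    have h3 := hD x hx.le
    positivity
  · intro x hx
    have hall : ∀ j, 1 < f^[j] x := by
      intro j
      induction j with
      | zero => simpa using hx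
      | succ j ih => rw [Function.iterate_succ_apply']; exact hgt _ ih
    have hanti : Antitone (fun j => f^[j] x) := by
      apply antitone_nat_of_succ_le
      intro j
      rw [Function.iterate_succ_apply']
      exact (hlt _ (hall j)).le
    have hbdd : BddBelow (Set.range fun j => f^[j] x) :=
      ⟨1, by rintro _ ⟨j, rfl⟩; exact (hall j).le⟩
    have htend := tendsto_atTop_ciInf hanti hbdd
    set L : ℝ := ⨅ j, f^[j] x with hL
    have hL1 : 1 ≤ L := le_ciInf fun j => (hall j).le
    rcases eq_or_lt_of_le hL1 with h | h
    · rwa [← h] at htend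
    · exfalso
      have hcontL : ContinuousAt f L := (hderiv L hL1).continuousAt
      have h2 : Filter.Tendsto (fun j => f^[j + 1] x) Filter.atTop (nhds L) :=
        htend.comp (Filter.tendsto_add_atTop_nat 1)
      have h3 : Filter.Tendsto (fun j => f (f^[j] x)) Filter.atTop (nhds (f L)) :=
        hcontL.tendsto.comp htend
      have h4 : (fun j => f^[j + 1] x) = fun j => f (f^[j] x) := by
        funext j; rw [Function.iterate_succ_apply']
      rw [h4] at h2
      have : f L = L := tendsto_nhds_unique h3 h2
      exact absurd this (hlt L h).ne
end

section
/- For p(z) = z(z²-1) and φ(y) = y³(3y²-1)/(6y⁴ + 3y² + 1), every real y satisfies φ^n(y) → 0 as n → ∞. In particular the imaginary axis is contained in the basin of attraction of the root 0 of p under H_p. -/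
lemma phi_contract (φ : ℝ → ℝ)
    (hφ : ∀ y, φ y = y ^ 3 * (3 * y ^ 2 - 1) / (6 * y ^ 4 + 3 * y ^ 2 + 1)) :
    ∀ y : ℝ, |φ y| ≤ |y| / 2 := by
  intro y
  have hd : (0:ℝ) < 6 * y ^ 4 + 3 * y ^ 2 + 1 := by positivity
  rw [hφ, abs_le]
  rcases abs_cases y with ⟨he, hs⟩ | ⟨he, hs⟩ <;> rw [he] <;> constructor
  · rw [le_div_iff₀ hd]; nlinarith [pow_nonneg hs 3, pow_nonneg hs 5, sq_nonneg y]
  · rw [div_le_iff₀ hd]; nlinarith [pow_nonneg hs 3, pow_nonneg hs 5, sq_nonneg y]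
  · rw [le_div_iff₀ hd]
    nlinarith [pow_nonneg (neg_nonneg.2 hs.le) 3, pow_nonneg (neg_nonneg.2 hs.le) 5, sq_nonneg y]
  · rw [div_le_iff₀ hd]
    nlinarith [pow_nonneg (neg_nonneg.2 hs.le) 3, pow_nonneg (neg_nonneg.2 hs.le) 5, sq_nonneg y]

lemma halley_imag (p : ℂ → ℂ) (hp : ∀ z, p z = z * (z ^ 2 - 1))
    (φ : ℝ → ℝ)
    (hφ : ∀ y, φ y = y ^ 3 * (3 * y ^ 2 - 1) / (6 * y ^ 4 + 3 * y ^ 2 + 1)) (t : ℝ) :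
    halley p (Complex.I * t) = Complex.I * (φ t) := by
  have hpe : p = fun z => z ^ 3 - z := funext fun z => by rw [hp]; ring
  have hd1 : deriv p = fun z => 3 * z ^ 2 - 1 := by
    funext z
    rw [hpe]
    have : HasDerivAt (fun z : ℂ => z ^ 3 - z) (3 * z ^ 2 - 1) z := by
      refine ((hasDerivAt_pow 3 z).sub (hasDerivAt_id' z)).congr_deriv ?_
      norm_num
    exact this.deriv
  have hd2 : deriv (deriv p) = fun z => 6 * z := by
    funext z
    rw [hd1]
    have : HasDerivAt (fun z : ℂ => 3 * z ^ 2 - 1) (6 * z) z := by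
      have := ((hasDerivAt_pow 2 z).const_mul (3:ℂ)).sub_const 1
      refine this.congr_deriv ?_
      norm_num
      ring
    exact this.deriv
  have e2 : (Complex.I * (t:ℂ)) ^ 2 = -((t:ℂ) ^ 2) := by
    rw [mul_pow, Complex.I_sq]; ring
  have e3 : (Complex.I * (t:ℂ)) ^ 3 = -(Complex.I * (t:ℂ) ^ 3) := by
    rw [mul_pow, pow_succ, sq, Complex.I_mul_I]; ring
  have h1 : (6 * (t:ℂ) ^ 4 + 3 * (t:ℂ) ^ 2 + 1) ≠ 0 := by
    have : (0:ℝ) < 6 * t ^ 4 + 3 * t ^ 2 + 1 := by positivity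
    exact_mod_cast (Complex.ofReal_ne_zero.2 this.ne')
  rw [halley, hd2, hd1, hpe]
  simp only []
  rw [hφ]
  push_cast
  rw [e2, e3]
  have hD : (2 * (3 * -((t:ℂ) ^ 2) - 1) ^ 2 -
      (-(Complex.I * (t:ℂ) ^ 3) - Complex.I * t) * (6 * (Complex.I * t))) =
      2 * (6 * (t:ℂ) ^ 4 + 3 * (t:ℂ) ^ 2 + 1) := by
    linear_combination (6 * (t:ℂ) ^ 4 + 6 * (t:ℂ) ^ 2) * Complex.I_mul_I
  rw [hD]
  have h2 : 2 * (6 * (t:ℂ) ^ 4 + 3 * (t:ℂ) ^ 2 + 1) ≠ 0 := mul_ne_zero two_ne_zero h1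
  have h3 : (t:ℂ) ^ 2 * ((t:ℂ) ^ 2 * 6 + 3) + 1 ≠ 0 := by
    convert h1 using 1; ring
  field_simp
  ring

theorem imaginary_axis_in_basin_of_zero
    (p : ℂ → ℂ) (hp : ∀ z, p z = z * (z ^ 2 - 1))
    (φ : ℝ → ℝ)
    (hφ : ∀ y, φ y = y ^ 3 * (3 * y ^ 2 - 1) / (6 * y ^ 4 + 3 * y ^ 2 + 1)) :
    (∀ y : ℝ, Filter.Tendsto (fun n => φ^[n] y) Filter.atTop (nhds 0)) ∧
    (∀ y : ℝ, Filter.Tendsto (fun n => (halley p)^[n] (Complex.I * y))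
      Filter.atTop (nhds 0)) := by
  have hmain : ∀ y : ℝ, Filter.Tendsto (fun n => φ^[n] y) Filter.atTop (nhds 0) := by
    intro y
    have hb : ∀ n, |φ^[n] y| ≤ (1/2 : ℝ) ^ n * |y| := by
      intro n
      induction n with
      | zero => simp
      | succ n ih =>
        rw [Function.iterate_succ_apply']
        calc |φ (φ^[n] y)| ≤ |φ^[n] y| / 2 := phi_contract φ hφ _
          _ ≤ (1/2 : ℝ) ^ n * |y| / 2 := by linarith
          _ = (1/2 : ℝ) ^ (n+1) * |y| := by ring
    have hg : Filter.Tendsto (fun n => (1/2 : ℝ) ^ n * |y|) Filter.atTop (nhds 0) := by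
      have := (tendsto_pow_atTop_nhds_zero_of_lt_one (by norm_num : (0:ℝ) ≤ 1/2)
        (by norm_num : (1/2:ℝ) < 1)).mul_const |y|
      simpa using this
    have hgn : Filter.Tendsto (fun n => -((1/2 : ℝ) ^ n * |y|)) Filter.atTop (nhds 0) := by
      simpa using hg.neg
    refine tendsto_of_tendsto_of_tendsto_of_le_of_le hgn hg
      (fun n => ?_) (fun n => ?_)
    · exact neg_le_of_abs_le (hb n)
    · exact le_of_abs_le (hb n)
  refine ⟨hmain, fun y => ?_⟩
  have hiter : ∀ n, (halley p)^[n] (Complex.I * y) = Complex.I * (φ^[n] y : ℝ) := by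
    intro n
    induction n with
    | zero => simp
    | succ n ih =>
      rw [Function.iterate_succ_apply', ih, Function.iterate_succ_apply',
        halley_imag p hp φ hφ]
  have : Filter.Tendsto (fun n => Complex.I * ((φ^[n] y : ℝ) : ℂ)) Filter.atTop (nhds 0) := by
    have hc : Filter.Tendsto (fun n => ((φ^[n] y : ℝ) : ℂ)) Filter.atTop (nhds 0) := by
      have := (Complex.continuous_ofReal.tendsto 0).comp (hmain y)
      simpa [Function.comp_def] using this
    simpa using hc.const_mul Complex.I
  simpa only [hiter] using this
end

section
/- For p(z) = z²(z²-1), Halley's method is H_p(z) = z(6z⁴ - 3z² + 1)/(10z⁴ - 9z² + 3), and H_p maps the imaginary axis to itself: H_p(iy) = iQ(y) with Q(y) = y(6y⁴ + 3y² + 1)/(10y⁴ + 9y² + 3). Moreover Q(y) - y = -2y(y²+1)(2y²+1)/(10y⁴+9y²+3), so Q(y) < y for all y > 0 and Q(y) > y for all y < 0, and hence Q^n(y) → 0 for every real y. -/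
open Filter

lemma aux_tendsto (f : ℝ → ℝ) (hc : Continuous f) (h0 : f 0 = 0)
    (hlt : ∀ x, 0 < x → f x < x) (hpos : ∀ x, 0 < x → 0 < f x)
    (y : ℝ) (hy : 0 ≤ y) :
    Filter.Tendsto (fun n => f^[n] y) Filter.atTop (nhds 0) := by
  rcases eq_or_lt_of_le hy with h | h
  · simp only [← h, Function.iterate_fixed h0]
    exact tendsto_const_nhds
  · have hposn : ∀ n, 0 < f^[n] y := by
      intro n
      induction n with
      | zero => exact h
      | succ n ih => rw [Function.iterate_succ_apply']; exact hpos _ ih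
    have hanti : Antitone (fun n => f^[n] y) :=
      antitone_nat_of_succ_le fun n => by
        rw [Function.iterate_succ_apply']; exact (hlt _ (hposn n)).le
    have hbdd : BddBelow (Set.range fun n => f^[n] y) := by
      refine ⟨0, ?_⟩
      rintro x ⟨n, rfl⟩
      exact (hposn n).le
    have htend := tendsto_atTop_ciInf hanti hbdd
    set L := ⨅ n, f^[n] y with hL
    have hL0 : 0 ≤ L := le_ciInf fun n => (hposn n).le
    have h1 : Tendsto (fun n => f^[n + 1] y) atTop (nhds L) :=
      htend.comp (tendsto_add_atTop_nat 1)
    have h2 : Tendsto (fun n => f (f^[n] y)) atTop (nhds (f L)) :=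
      (hc.tendsto L).comp htend
    have hfix : f L = L := by
      refine tendsto_nhds_unique h2 ?_
      simpa only [Function.iterate_succ_apply'] using h1
    rcases eq_or_lt_of_le hL0 with hL' | hL'
    · rw [← hL'] at htend; exact htend
    · exact absurd hfix (ne_of_lt (hlt L hL'))

theorem halley_quartic_zsq_zsq_minus_one
    (p : ℂ → ℂ) (hp : ∀ z, p z = z ^ 2 * (z ^ 2 - 1))
    (Q : ℝ → ℝ)
    (hQ : ∀ y, Q y = y * (6 * y ^ 4 + 3 * y ^ 2 + 1) / (10 * y ^ 4 + 9 * y ^ 2 + 3)) :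
    (∀ z : ℂ, z ≠ 0 → 10 * z ^ 4 - 9 * z ^ 2 + 3 ≠ 0 →
      halley p z = z * (6 * z ^ 4 - 3 * z ^ 2 + 1) / (10 * z ^ 4 - 9 * z ^ 2 + 3)) ∧
    (∀ y : ℝ, halley p (Complex.I * y) = Complex.I * (Q y : ℂ)) ∧
    (∀ y : ℝ, Q y - y =
      -(2 * y * (y ^ 2 + 1) * (2 * y ^ 2 + 1)) / (10 * y ^ 4 + 9 * y ^ 2 + 3)) ∧
    (∀ y : ℝ, 0 < y → Q y < y) ∧
    (∀ y : ℝ, y < 0 → y < Q y) ∧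
    (∀ y : ℝ, Filter.Tendsto (fun n => Q^[n] y) Filter.atTop (nhds 0)) := by
  have hpe : p = fun z => z ^ 2 * (z ^ 2 - 1) := funext hp
  subst hpe
  have hder : deriv (fun z : ℂ => z ^ 2 * (z ^ 2 - 1)) = fun z => 4 * z ^ 3 - 2 * z := by
    funext z
    have h := (hasDerivAt_pow 2 z).mul ((hasDerivAt_pow 2 z).sub_const 1)
    rw [show (fun z : ℂ => z ^ 2 * (z ^ 2 - 1)) = ((fun x => x ^ 2) * fun x => x ^ 2 - 1) from rfl,
      h.deriv]; push_cast; ring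
  have hder2 : deriv (fun z : ℂ => 4 * z ^ 3 - 2 * z) = fun z => 12 * z ^ 2 - 2 := by
    funext z
    have h : HasDerivAt (fun z : ℂ => 4 * z ^ 3 - 2 * z)
        (4 * ((3 : ℕ) * z ^ (3 - 1)) - 2 * 1) z :=
      ((hasDerivAt_pow 3 z).const_mul (4 : ℂ)).sub ((hasDerivAt_id z).const_mul 2)
    rw [h.deriv]; push_cast; ring
  have hhall : ∀ z : ℂ, halley (fun z => z ^ 2 * (z ^ 2 - 1)) z =
      z - 2 * (z ^ 2 * (z ^ 2 - 1)) * (4 * z ^ 3 - 2 * z) /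
        (2 * (4 * z ^ 3 - 2 * z) ^ 2 - z ^ 2 * (z ^ 2 - 1) * (12 * z ^ 2 - 2)) := by
    intro z
    rw [halley, hder, hder2]
  have part1 : ∀ z : ℂ, z ≠ 0 → 10 * z ^ 4 - 9 * z ^ 2 + 3 ≠ 0 →
      halley (fun z => z ^ 2 * (z ^ 2 - 1)) z =
        z * (6 * z ^ 4 - 3 * z ^ 2 + 1) / (10 * z ^ 4 - 9 * z ^ 2 + 3) := by
    intro z hz hD
    rw [hhall z]
    have hden : 2 * (4 * z ^ 3 - 2 * z) ^ 2 - z ^ 2 * (z ^ 2 - 1) * (12 * z ^ 2 - 2)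
        = 2 * z ^ 2 * (10 * z ^ 4 - 9 * z ^ 2 + 3) := by ring
    rw [hden]
    have h2 : (2 * z ^ 2 * (10 * z ^ 4 - 9 * z ^ 2 + 3)) ≠ 0 :=
      mul_ne_zero (mul_ne_zero two_ne_zero (pow_ne_zero 2 hz)) hD
    rw [sub_eq_iff_eq_add, div_add_div _ _ hD h2, eq_div_iff (mul_ne_zero hD h2)]
    ring
  have hDpos : ∀ y : ℝ, (0 : ℝ) < 10 * y ^ 4 + 9 * y ^ 2 + 3 := by
    intro y; positivity
  have hQ0 : Q 0 = 0 := by rw [hQ]; norm_num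
  have part2 : ∀ y : ℝ, halley (fun z => z ^ 2 * (z ^ 2 - 1)) (Complex.I * y)
      = Complex.I * (Q y : ℂ) := by
    intro y
    rcases eq_or_ne y 0 with rfl | hy
    · rw [hhall]
      simp [hQ0]
    · have hz : (Complex.I * (y : ℂ)) ≠ 0 := by
        simp [Complex.I_ne_zero, hy]
      have e2 : (Complex.I * (y : ℂ)) ^ 2 = -(y : ℂ) ^ 2 := by
        rw [mul_pow, Complex.I_sq]; ring
      have e4 : (Complex.I * (y : ℂ)) ^ 4 = (y : ℂ) ^ 4 := by
        rw [show (4 : ℕ) = 2 * 2 from rfl, pow_mul, e2]; ring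
      have hDr : (10 : ℂ) * (Complex.I * (y : ℂ)) ^ 4 - 9 * (Complex.I * (y : ℂ)) ^ 2 + 3
          = ((10 * y ^ 4 + 9 * y ^ 2 + 3 : ℝ) : ℂ) := by
        rw [e2, e4]; push_cast; ring
      have hDne : (10 : ℂ) * (Complex.I * (y : ℂ)) ^ 4 - 9 * (Complex.I * (y : ℂ)) ^ 2 + 3 ≠ 0 := by
        rw [hDr]
        exact_mod_cast (hDpos y).ne'
      rw [part1 _ hz hDne, hQ]
      rw [e2, e4]
      push_cast
      ring
  have part3 : ∀ y : ℝ, Q y - y =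
      -(2 * y * (y ^ 2 + 1) * (2 * y ^ 2 + 1)) / (10 * y ^ 4 + 9 * y ^ 2 + 3) := by
    intro y
    rw [hQ]
    have hD := (hDpos y).ne'
    field_simp
    ring
  have part4 : ∀ y : ℝ, 0 < y → Q y < y := by
    intro y hy
    have h3 := part3 y
    have hneg : Q y - y < 0 := by
      rw [h3]
      apply div_neg_of_neg_of_pos _ (hDpos y)
      have h1 : 0 < 2 * y * (y ^ 2 + 1) * (2 * y ^ 2 + 1) := by positivity
      linarith
    linarith
  have part5 : ∀ y : ℝ, y < 0 → y < Q y := by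
    intro y hy
    have h3 := part3 y
    have hpos : 0 < Q y - y := by
      rw [h3]
      apply div_pos _ (hDpos y)
      have h1 : -(2 * y * (y ^ 2 + 1) * (2 * y ^ 2 + 1))
          = 2 * (-y) * ((y ^ 2 + 1) * (2 * y ^ 2 + 1)) := by ring
      rw [h1]
      exact mul_pos (by linarith) (by positivity)
    linarith
  have hQc : Continuous Q := by
    have : Q = fun y => y * (6 * y ^ 4 + 3 * y ^ 2 + 1) / (10 * y ^ 4 + 9 * y ^ 2 + 3) :=
      funext hQ
    rw [this]
    apply Continuous.div
    · fun_prop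
    · fun_prop
    · exact fun y => (hDpos y).ne'
  have hQpos : ∀ x : ℝ, 0 < x → 0 < Q x := by
    intro x hx
    rw [hQ]
    exact div_pos (mul_pos hx (by positivity)) (hDpos x)
  have hodd : ∀ y : ℝ, Q (-y) = -Q y := by
    intro y
    rw [hQ, hQ]
    ring
  have hiter : ∀ (n : ℕ) (y : ℝ), Q^[n] (-y) = -(Q^[n] y) := by
    intro n
    induction n with
    | zero => simp
    | succ n ih =>
      intro y
      rw [Function.iterate_succ_apply, Function.iterate_succ_apply, hodd, ih]
  have part6 : ∀ y : ℝ, Filter.Tendsto (fun n => Q^[n] y) Filter.atTop (nhds 0) := by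
    intro y
    rcases le_or_gt 0 y with hy | hy
    · exact aux_tendsto Q hQc hQ0 part4 hQpos y hy
    · have h := aux_tendsto Q hQc hQ0 part4 hQpos (-y) (by linarith)
      have := h.neg
      rw [neg_zero] at this
      refine this.congr fun n => ?_
      rw [← hiter n (-y), neg_neg]
  exact ⟨part1, part2, part3, part4, part5, part6⟩
end

section
/- For p(z) = z(z^n - 1) with n ≥ 2, Halley's method is H_p(z) = n z^{n+1}((n+1)z^n + (n-1)) / ((n+2)(n+1)z^{2n} + (n+1)(n-4)z^n + 2), with derivative H_p'(z) = n(n+1) z^n (z^n - 1)² ((n+1)(n+2)z^n + 2(n-1)) / ((n+2)(n+1)z^{2n} + (n+1)(n-4)z^n + 2)². The free critical points satisfy z^n = -2(n-1)/((n+1)(n+2)), and the poles satisfy z^n = (-(n-4)(n+1) ± n√((n-7)(n+1)))/(2(n+1)(n+2)). In particular, for 2 ≤ n < 7 all poles of H_p are non-real. -/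
theorem halley_z_zn_minus_one (n : ℕ) (hn : 2 ≤ n)
    (p : ℂ → ℂ) (hp : ∀ z, p z = z * (z ^ n - 1))
    (den : ℂ → ℂ)
    (hden : ∀ z, den z = ((n : ℂ) + 2) * ((n : ℂ) + 1) * z ^ (2 * n) +
      ((n : ℂ) + 1) * ((n : ℂ) - 4) * z ^ n + 2) :
    (∀ z : ℂ, den z ≠ 0 →
      halley p z = (n : ℂ) * z ^ (n + 1) * (((n : ℂ) + 1) * z ^ n + ((n : ℂ) - 1)) / den z ∧
      deriv (halley p) z =
        (n : ℂ) * ((n : ℂ) + 1) * z ^ n * (z ^ n - 1) ^ 2 *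
          (((n : ℂ) + 1) * ((n : ℂ) + 2) * z ^ n + 2 * ((n : ℂ) - 1)) / (den z) ^ 2) ∧
    (∀ z : ℂ, den z ≠ 0 →
      ((deriv (halley p) z = 0 ∧ p z ≠ 0) ↔
        z ^ n = -2 * ((n : ℂ) - 1) / (((n : ℂ) + 1) * ((n : ℂ) + 2)))) ∧
    (∀ w : ℂ, w ^ 2 = ((n : ℂ) - 7) * ((n : ℂ) + 1) →
      ∀ z : ℂ, den z = 0 ↔
        z ^ n = (-(((n : ℂ) - 4) * ((n : ℂ) + 1)) + (n : ℂ) * w) /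
          (2 * ((n : ℂ) + 1) * ((n : ℂ) + 2)) ∨
        z ^ n = (-(((n : ℂ) - 4) * ((n : ℂ) + 1)) - (n : ℂ) * w) /
          (2 * ((n : ℂ) + 1) * ((n : ℂ) + 2))) ∧
    (n < 7 → ∀ z : ℂ, den z = 0 → z.im ≠ 0) := by
  obtain ⟨m, rfl⟩ : ∃ m, n = m + 2 := ⟨n - 2, by omega⟩
  clear hn
  -- cast nonzero facts
  have hc0 : ((m + 2 : ℕ) : ℂ) ≠ 0 := Nat.cast_ne_zero.mpr (by omega)
  have hc1 : ((m + 2 : ℕ) : ℂ) + 1 ≠ 0 := by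
    exact_mod_cast Nat.cast_ne_zero (R := ℂ).mpr (show m + 2 + 1 ≠ 0 by omega)
  have hc2 : ((m + 2 : ℕ) : ℂ) + 2 ≠ 0 := by
    exact_mod_cast Nat.cast_ne_zero (R := ℂ).mpr (show m + 2 + 2 ≠ 0 by omega)
  have hcm1 : ((m + 2 : ℕ) : ℂ) - 1 ≠ 0 :=
    sub_ne_zero.mpr (by exact_mod_cast (show m + 2 ≠ 1 by omega))
  -- p is the polynomial z^(m+3) - z
  have hpf : p = fun w : ℂ => w ^ (m + 3) - w := by
    funext w; rw [hp]; ring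
  have hP' : ∀ w : ℂ, HasDerivAt p (((m : ℂ) + 3) * w ^ (m + 2) - 1) w := by
    intro w
    rw [hpf]
    have h := (hasDerivAt_pow (m + 3) w).sub (hasDerivAt_id w)
    refine h.congr_deriv ?_
    push_cast; ring_nf
  have hderivp : deriv p = fun w : ℂ => ((m : ℂ) + 3) * w ^ (m + 2) - 1 :=
    funext fun w => (hP' w).deriv
  have hP'' : ∀ w : ℂ, deriv (deriv p) w = ((m : ℂ) + 3) * ((m : ℂ) + 2) * w ^ (m + 1) := by
    intro w
    rw [hderivp]
    have h := ((hasDerivAt_pow (m + 2) w).const_mul ((m : ℂ) + 3)).sub_const 1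
    rw [h.deriv]
    push_cast; ring_nf
  -- the halley formula
  have hH : ∀ z : ℂ, den z ≠ 0 →
      halley p z = ((m + 2 : ℕ) : ℂ) * z ^ (m + 2 + 1) *
        ((((m + 2 : ℕ) : ℂ) + 1) * z ^ (m + 2) + (((m + 2 : ℕ) : ℂ) - 1)) / den z := by
    intro z hz
    have hB : 2 * (deriv p z) ^ 2 - p z * deriv (deriv p) z = den z := by
      rw [hP'', hderivp, hp, hden]; push_cast; ring
    show z - 2 * p z * deriv p z / (2 * (deriv p z) ^ 2 - p z * deriv (deriv p) z) = _
    rw [hB, hderivp, hp]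
    field_simp
    push_cast
    rw [hden]
    push_cast
    ring
  have hHd : ∀ z : ℂ, den z ≠ 0 →
      deriv (halley p) z =
        ((m + 2 : ℕ) : ℂ) * (((m + 2 : ℕ) : ℂ) + 1) * z ^ (m + 2) * (z ^ (m + 2) - 1) ^ 2 *
          ((((m + 2 : ℕ) : ℂ) + 1) * (((m + 2 : ℕ) : ℂ) + 2) * z ^ (m + 2) +
            2 * (((m + 2 : ℕ) : ℂ) - 1)) / (den z) ^ 2 := by
    intro z hz
    have hcont : Continuous den := by
      rw [funext hden]
      fun_prop
    have hne : ∀ᶠ w in nhds z, den w ≠ 0 := hcont.continuousAt.eventually_ne hz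
    have heq : halley p =ᶠ[nhds z] fun w : ℂ => ((m + 2 : ℕ) : ℂ) * w ^ (m + 2 + 1) *
        ((((m + 2 : ℕ) : ℂ) + 1) * w ^ (m + 2) + (((m + 2 : ℕ) : ℂ) - 1)) / den w :=
      hne.mono fun w hw => hH w hw
    have h1 : HasDerivAt (fun w : ℂ => ((m + 2 : ℕ) : ℂ) * w ^ (m + 2 + 1))
        (((m + 2 : ℕ) : ℂ) * (((m + 2 + 1 : ℕ) : ℂ) * z ^ (m + 2 + 1 - 1))) z :=
      (hasDerivAt_pow (m + 2 + 1) z).const_mul _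
    have h2 : HasDerivAt (fun w : ℂ => (((m + 2 : ℕ) : ℂ) + 1) * w ^ (m + 2) + (((m + 2 : ℕ) : ℂ) - 1))
        ((((m + 2 : ℕ) : ℂ) + 1) * (((m + 2 : ℕ) : ℂ) * z ^ (m + 2 - 1))) z :=
      (((hasDerivAt_pow (m + 2) z).const_mul _)).add_const _
    have h3 : HasDerivAt den
        (((((m + 2 : ℕ) : ℂ) + 2) * (((m + 2 : ℕ) : ℂ) + 1)) * (((2 * (m + 2) : ℕ) : ℂ) * z ^ (2 * (m + 2) - 1)) +
          ((((m + 2 : ℕ) : ℂ) + 1) * (((m + 2 : ℕ) : ℂ) - 4)) * (((m + 2 : ℕ) : ℂ) * z ^ (m + 2 - 1))) z := by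
      rw [funext hden]
      exact (((hasDerivAt_pow (2 * (m + 2)) z).const_mul _).add
        ((hasDerivAt_pow (m + 2) z).const_mul _)).add_const _
    have h4 : HasDerivAt (fun w : ℂ => ((m + 2 : ℕ) : ℂ) * w ^ (m + 2 + 1) *
        ((((m + 2 : ℕ) : ℂ) + 1) * w ^ (m + 2) + (((m + 2 : ℕ) : ℂ) - 1)) / den w)
        ((((((m + 2 : ℕ) : ℂ) * (((m + 2 + 1 : ℕ) : ℂ) * z ^ (m + 2 + 1 - 1))) *
            ((((m + 2 : ℕ) : ℂ) + 1) * z ^ (m + 2) + (((m + 2 : ℕ) : ℂ) - 1)) +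
          (((m + 2 : ℕ) : ℂ) * z ^ (m + 2 + 1)) *
            ((((m + 2 : ℕ) : ℂ) + 1) * (((m + 2 : ℕ) : ℂ) * z ^ (m + 2 - 1)))) * den z -
          ((m + 2 : ℕ) : ℂ) * z ^ (m + 2 + 1) *
            ((((m + 2 : ℕ) : ℂ) + 1) * z ^ (m + 2) + (((m + 2 : ℕ) : ℂ) - 1)) *
          (((((m + 2 : ℕ) : ℂ) + 2) * (((m + 2 : ℕ) : ℂ) + 1)) * (((2 * (m + 2) : ℕ) : ℂ) * z ^ (2 * (m + 2) - 1)) +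
            ((((m + 2 : ℕ) : ℂ) + 1) * (((m + 2 : ℕ) : ℂ) - 4)) * (((m + 2 : ℕ) : ℂ) * z ^ (m + 2 - 1)))) /
          den z ^ 2) z :=
      (h1.mul h2).div h3 hz
    rw [heq.deriv_eq, h4.deriv]
    rw [div_eq_div_iff (pow_ne_zero 2 hz) (pow_ne_zero 2 hz)]
    simp only [hden]
    simp only [show m + 2 + 1 - 1 = m + 2 from by omega, show m + 2 - 1 = m + 1 from by omega,
      show 2 * (m + 2) - 1 = 2 * m + 3 from by omega]
    push_cast
    ring
  refine ⟨fun z hz => ⟨hH z hz, hHd z hz⟩, fun z hz => ?_, fun w hw z => ?_, fun h7 z hdz him => ?_⟩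
  · -- critical point characterization
    rw [hHd z hz, hp z]
    have hrhs : -2 * (((m + 2 : ℕ) : ℂ) - 1) / ((((m + 2 : ℕ) : ℂ) + 1) * (((m + 2 : ℕ) : ℂ) + 2)) ≠ 0 :=
      div_ne_zero (mul_ne_zero (by norm_num) hcm1) (mul_ne_zero hc1 hc2)
    constructor
    · rintro ⟨h0, hne0⟩
      obtain ⟨hz0, hz1⟩ := mul_ne_zero_iff.mp hne0
      rcases div_eq_zero_iff.mp h0 with h0 | h0
      swap
      · exact absurd h0 (pow_ne_zero 2 hz)
      have h5 : (((m + 2 : ℕ) : ℂ) + 1) * (((m + 2 : ℕ) : ℂ) + 2) * z ^ (m + 2) +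
          2 * (((m + 2 : ℕ) : ℂ) - 1) = 0 := by
        rcases mul_eq_zero.mp h0 with h | h
        · exfalso
          rcases mul_eq_zero.mp h with h | h
          · rcases mul_eq_zero.mp h with h | h
            · rcases mul_eq_zero.mp h with h | h
              · exact hc0 h
              · exact hc1 h
            · exact pow_ne_zero _ hz0 h
          · exact hz1 (sq_eq_zero_iff.mp h)
        · exact h
      rw [eq_div_iff (mul_ne_zero hc1 hc2)]
      linear_combination h5
    · intro hzn
      have hG : (((m + 2 : ℕ) : ℂ) + 1) * (((m + 2 : ℕ) : ℂ) + 2) * z ^ (m + 2) +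
          2 * (((m + 2 : ℕ) : ℂ) - 1) = 0 := by
        have hzn' : z ^ (m + 2) * ((((m + 2 : ℕ) : ℂ) + 1) * (((m + 2 : ℕ) : ℂ) + 2)) =
            -2 * (((m + 2 : ℕ) : ℂ) - 1) := by
          rw [hzn]
          exact div_mul_cancel₀ _ (mul_ne_zero hc1 hc2)
        linear_combination hzn'
      refine ⟨div_eq_zero_iff.mpr (Or.inl (mul_eq_zero_of_right _ hG)), ?_⟩
      have hz0 : z ≠ 0 := by
        intro h
        apply hrhs
        rw [← hzn, h, zero_pow (by omega : m + 2 ≠ 0)]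
      have hz1 : z ^ (m + 2) - 1 ≠ 0 := by
        rw [sub_ne_zero]
        intro h
        rw [h] at hzn
        have h14 : ((m * m + 9 * m + 14 : ℕ) : ℂ) = 0 := by
          rw [eq_comm, div_eq_iff (mul_ne_zero hc1 hc2)] at hzn
          push_cast at hzn ⊢
          linear_combination -hzn
        exact absurd (Nat.cast_eq_zero.mp h14) (by omega)
      exact mul_ne_zero hz0 hz1
  · -- poles
    have h2A : 2 * (((m + 2 : ℕ) : ℂ) + 1) * (((m + 2 : ℕ) : ℂ) + 2) ≠ 0 :=
      mul_ne_zero (mul_ne_zero two_ne_zero hc1) hc2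
    have hkey : 4 * ((((m + 2 : ℕ) : ℂ) + 1) * (((m + 2 : ℕ) : ℂ) + 2)) * den z =
        (2 * (((m + 2 : ℕ) : ℂ) + 1) * (((m + 2 : ℕ) : ℂ) + 2) * z ^ (m + 2) +
          (((m + 2 : ℕ) : ℂ) - 4) * (((m + 2 : ℕ) : ℂ) + 1) - ((m + 2 : ℕ) : ℂ) * w) *
        (2 * (((m + 2 : ℕ) : ℂ) + 1) * (((m + 2 : ℕ) : ℂ) + 2) * z ^ (m + 2) +
          (((m + 2 : ℕ) : ℂ) - 4) * (((m + 2 : ℕ) : ℂ) + 1) + ((m + 2 : ℕ) : ℂ) * w) := by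
      rw [hden]
      push_cast at hw ⊢
      linear_combination (((m : ℂ) + 2) ^ 2) * hw
    constructor
    · intro h0
      have hprod : (2 * (((m + 2 : ℕ) : ℂ) + 1) * (((m + 2 : ℕ) : ℂ) + 2) * z ^ (m + 2) +
          (((m + 2 : ℕ) : ℂ) - 4) * (((m + 2 : ℕ) : ℂ) + 1) - ((m + 2 : ℕ) : ℂ) * w) *
        (2 * (((m + 2 : ℕ) : ℂ) + 1) * (((m + 2 : ℕ) : ℂ) + 2) * z ^ (m + 2) +
          (((m + 2 : ℕ) : ℂ) - 4) * (((m + 2 : ℕ) : ℂ) + 1) + ((m + 2 : ℕ) : ℂ) * w) = 0 := by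
        rw [← hkey, h0, mul_zero]
      rcases mul_eq_zero.mp hprod with h | h
      · left
        rw [eq_div_iff h2A]
        linear_combination h
      · right
        rw [eq_div_iff h2A]
        linear_combination h
    · intro h
      have h4A : 4 * ((((m + 2 : ℕ) : ℂ) + 1) * (((m + 2 : ℕ) : ℂ) + 2)) ≠ 0 :=
        mul_ne_zero (by norm_num) (mul_ne_zero hc1 hc2)
      have hprod : 4 * ((((m + 2 : ℕ) : ℂ) + 1) * (((m + 2 : ℕ) : ℂ) + 2)) * den z = 0 := by
        rw [hkey]
        have e : ∀ X : ℂ, 2 * (((m + 2 : ℕ) : ℂ) + 1) * (((m + 2 : ℕ) : ℂ) + 2) *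
            (X / (2 * (((m + 2 : ℕ) : ℂ) + 1) * (((m + 2 : ℕ) : ℂ) + 2))) = X := fun X => by
          rw [mul_div_assoc']
          exact mul_div_cancel_left₀ X h2A
        rcases h with h | h
        · apply mul_eq_zero_of_left
          rw [h, e]
          ring
        · apply mul_eq_zero_of_right
          rw [h, e]
          ring
      exact (mul_eq_zero.mp hprod).resolve_left h4A
  · -- no real poles for n < 7
    obtain ⟨t, rfl⟩ : ∃ t : ℝ, z = (t : ℂ) := ⟨z.re, by apply Complex.ext <;> simp [him]⟩
    rw [hden] at hdz
    have hre : (((m + 2 : ℕ) : ℝ) + 2) * (((m + 2 : ℕ) : ℝ) + 1) * t ^ (2 * (m + 2)) +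
        (((m + 2 : ℕ) : ℝ) + 1) * (((m + 2 : ℕ) : ℝ) - 4) * t ^ (m + 2) + 2 = 0 := by
      exact_mod_cast hdz
    have hs2 : t ^ (2 * (m + 2)) = (t ^ (m + 2)) ^ 2 := by
      rw [← pow_mul, Nat.mul_comm]
    rw [hs2] at hre
    set s := t ^ (m + 2) with hs
    have hm4 : m ≤ 4 := by omega
    push_cast at hre
    interval_cases m <;>
      (norm_num at hre; nlinarith [sq_nonneg s, sq_nonneg (2 * s - 1), sq_nonneg (4 * s + 1),
        sq_nonneg (s + 1), sq_nonneg (s - 1)])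
end

section
/- Let H_b be Halley's method applied to p_b(z) = z³ + 6z + b, so H_b(z) = (z⁵ - 2z³ - 2bz² - 2b)/(2z⁴ + 6z² - bz + 12) and H_b'(z) = 2(z³ + 6z + b)²(z² - 1)/(2z⁴ + 6z² - bz + 12)². Then H_b(1) = (1+4b)/(b-20), and the condition H_b²(1) = 1 (with 1 not a root of p_b, i.e., b ≠ -7) is equivalent to 10b⁵ - 757b⁴ + 9625b³ - 92141b² + 388025b - 1830821 = 0; in particular there exists b ∈ ℂ for which H_b has a superattracting 2-periodic cycle containing the critical point 1. -/
private lemma cubic_hasDerivAt (b z : ℂ) :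
    HasDerivAt (fun z : ℂ => z ^ 3 + 6 * z + b) (3 * z ^ 2 + 6) z := by
  have h := (((hasDerivAt_pow 3 z).add ((hasDerivAt_id z).const_mul 6)).add_const b)
  exact h.congr_deriv (by push_cast; ring)

private lemma quad_hasDerivAt (z : ℂ) :
    HasDerivAt (fun z : ℂ => 3 * z ^ 2 + 6) (6 * z) z := by
  have h := ((hasDerivAt_pow 2 z).const_mul (3:ℂ)).add_const (6:ℂ)
  exact h.congr_deriv (by push_cast; ring)

private lemma halley_eq (b : ℂ) (p : ℂ → ℂ) (hp : ∀ z, p z = z ^ 3 + 6 * z + b) :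
    halley p = fun z => z - 2 * (z ^ 3 + 6 * z + b) * (3 * z ^ 2 + 6) /
      (2 * (3 * z ^ 2 + 6) ^ 2 - (z ^ 3 + 6 * z + b) * (6 * z)) := by
  have hpe : p = fun z => z ^ 3 + 6 * z + b := funext hp
  have hd1 : deriv p = fun z => 3 * z ^ 2 + 6 := by
    funext z; rw [hpe]; exact (cubic_hasDerivAt b z).deriv
  have hd2 : deriv (deriv p) = fun z => 6 * z := by
    funext z; rw [hd1]; exact (quad_hasDerivAt z).deriv
  funext z
  unfold halley
  rw [hd2, hd1, hpe]

private lemma halley_hasDerivAt (b z : ℂ) (p : ℂ → ℂ) (hp : ∀ z, p z = z ^ 3 + 6 * z + b)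
    (hz : 2 * z ^ 4 + 6 * z ^ 2 - b * z + 12 ≠ 0) :
    HasDerivAt (halley p)
      (2 * (z ^ 3 + 6 * z + b) ^ 2 * (z ^ 2 - 1) /
        (2 * z ^ 4 + 6 * z ^ 2 - b * z + 12) ^ 2) z := by
  have hden : 2 * (3 * z ^ 2 + 6) ^ 2 - (z ^ 3 + 6 * z + b) * (6 * z)
      = 6 * (2 * z ^ 4 + 6 * z ^ 2 - b * z + 12) := by ring
  have h6 : 2 * (3 * z ^ 2 + 6) ^ 2 - (z ^ 3 + 6 * z + b) * (6 * z) ≠ 0 := by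
    rw [hden]; exact mul_ne_zero (by norm_num) hz
  have hq := cubic_hasDerivAt b z
  have hq2 := quad_hasDerivAt z
  have h6z : HasDerivAt (fun z : ℂ => 6 * z) 6 z := by
    simpa using (hasDerivAt_id z).const_mul (6:ℂ)
  have hN : HasDerivAt (fun z => 2 * (z ^ 3 + 6 * z + b) * (3 * z ^ 2 + 6))
      (2 * ((3 * z ^ 2 + 6) * (3 * z ^ 2 + 6) + (z ^ 3 + 6 * z + b) * (6 * z))) z := by
    have h := (hq.mul hq2).const_mul (2:ℂ)
    exact (h.congr_of_eventuallyEq (Filter.Eventually.of_forall fun y => by simp only [Pi.mul_apply]; ring)).congr_deriv (by ring)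
  have hDsq : HasDerivAt (fun z : ℂ => 2 * (3 * z ^ 2 + 6) ^ 2)
      (2 * (2 * (3 * z ^ 2 + 6) * (6 * z))) z := by
    have h := ((hq2.pow 2).const_mul (2:ℂ))
    exact h.congr_deriv (by push_cast; ring)
  have hD : HasDerivAt (fun z => 2 * (3 * z ^ 2 + 6) ^ 2 - (z ^ 3 + 6 * z + b) * (6 * z))
      (2 * (2 * (3 * z ^ 2 + 6) * (6 * z)) - ((3 * z ^ 2 + 6) * (6 * z) + (z ^ 3 + 6 * z + b) * 6)) z :=
    hDsq.sub (hq.mul h6z)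
  have hdiv := hN.div hD h6
  have hmain := (hasDerivAt_id z).sub hdiv
  rw [halley_eq b p hp]
  have hveq : (1:ℂ) - (2 * ((3 * z ^ 2 + 6) * (3 * z ^ 2 + 6) + (z ^ 3 + 6 * z + b) * (6 * z)) *
        (2 * (3 * z ^ 2 + 6) ^ 2 - (z ^ 3 + 6 * z + b) * (6 * z)) -
      2 * (z ^ 3 + 6 * z + b) * (3 * z ^ 2 + 6) *
        (2 * (2 * (3 * z ^ 2 + 6) * (6 * z)) - ((3 * z ^ 2 + 6) * (6 * z) + (z ^ 3 + 6 * z + b) * 6))) /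
      (2 * (3 * z ^ 2 + 6) ^ 2 - (z ^ 3 + 6 * z + b) * (6 * z)) ^ 2
      = 2 * (z ^ 3 + 6 * z + b) ^ 2 * (z ^ 2 - 1) /
        (2 * z ^ 4 + 6 * z ^ 2 - b * z + 12) ^ 2 := by
    rw [hden, sub_div' (pow_ne_zero 2 (mul_ne_zero (by norm_num) hz)),
      div_eq_div_iff (pow_ne_zero 2 (mul_ne_zero (by norm_num) hz)) (pow_ne_zero 2 hz)]
    ring
  rw [← hveq]
  exact hmain

private lemma halley_val (b z : ℂ) (p : ℂ → ℂ) (hp : ∀ z, p z = z ^ 3 + 6 * z + b)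
    (hz : 2 * z ^ 4 + 6 * z ^ 2 - b * z + 12 ≠ 0) :
    halley p z = (z ^ 5 - 2 * z ^ 3 - 2 * b * z ^ 2 - 2 * b) /
      (2 * z ^ 4 + 6 * z ^ 2 - b * z + 12) := by
  have h6 : 2 * (3 * z ^ 2 + 6) ^ 2 - (z ^ 3 + 6 * z + b) * (6 * z) ≠ 0 := by
    rw [show 2 * (3 * z ^ 2 + 6) ^ 2 - (z ^ 3 + 6 * z + b) * (6 * z)
      = 6 * (2 * z ^ 4 + 6 * z ^ 2 - b * z + 12) from by ring]
    exact mul_ne_zero (by norm_num) hz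
  rw [halley_eq b p hp]
  beta_reduce
  rw [show 2 * (3 * z ^ 2 + 6) ^ 2 - (z ^ 3 + 6 * z + b) * (6 * z)
    = 6 * (2 * z ^ 4 + 6 * z ^ 2 - b * z + 12) from by ring]
  rw [sub_div' (mul_ne_zero (by norm_num) hz), div_eq_div_iff (mul_ne_zero (by norm_num) hz) hz]
  ring

theorem halley_cubic_superattracting_two_cycle :
    (∀ b : ℂ, ∀ p : ℂ → ℂ, (∀ z, p z = z ^ 3 + 6 * z + b) →
      (∀ z : ℂ, 2 * z ^ 4 + 6 * z ^ 2 - b * z + 12 ≠ 0 →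
        halley p z = (z ^ 5 - 2 * z ^ 3 - 2 * b * z ^ 2 - 2 * b) /
          (2 * z ^ 4 + 6 * z ^ 2 - b * z + 12) ∧
        deriv (halley p) z = 2 * (z ^ 3 + 6 * z + b) ^ 2 * (z ^ 2 - 1) /
          (2 * z ^ 4 + 6 * z ^ 2 - b * z + 12) ^ 2) ∧
      (b ≠ 20 → halley p 1 = (1 + 4 * b) / (b - 20)) ∧
      (b ≠ -7 → b ≠ 20 →
        2 * ((1 + 4 * b) / (b - 20)) ^ 4 + 6 * ((1 + 4 * b) / (b - 20)) ^ 2 -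
          b * ((1 + 4 * b) / (b - 20)) + 12 ≠ 0 →
        (halley p (halley p 1) = 1 ↔
          10 * b ^ 5 - 757 * b ^ 4 + 9625 * b ^ 3 - 92141 * b ^ 2 +
            388025 * b - 1830821 = 0))) ∧
    (∃ b z₁ : ℂ, z₁ ≠ 1 ∧
      halley (fun z => z ^ 3 + 6 * z + b) 1 = z₁ ∧
      halley (fun z => z ^ 3 + 6 * z + b) z₁ = 1 ∧
      deriv (halley (fun z => z ^ 3 + 6 * z + b) ∘
        halley (fun z => z ^ 3 + 6 * z + b)) 1 = 0) := by
  have main : ∀ b : ℂ, ∀ p : ℂ → ℂ, (∀ z, p z = z ^ 3 + 6 * z + b) →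
      (∀ z : ℂ, 2 * z ^ 4 + 6 * z ^ 2 - b * z + 12 ≠ 0 →
        halley p z = (z ^ 5 - 2 * z ^ 3 - 2 * b * z ^ 2 - 2 * b) /
          (2 * z ^ 4 + 6 * z ^ 2 - b * z + 12) ∧
        deriv (halley p) z = 2 * (z ^ 3 + 6 * z + b) ^ 2 * (z ^ 2 - 1) /
          (2 * z ^ 4 + 6 * z ^ 2 - b * z + 12) ^ 2) ∧
      (b ≠ 20 → halley p 1 = (1 + 4 * b) / (b - 20)) ∧
      (b ≠ -7 → b ≠ 20 →
        2 * ((1 + 4 * b) / (b - 20)) ^ 4 + 6 * ((1 + 4 * b) / (b - 20)) ^ 2 -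
          b * ((1 + 4 * b) / (b - 20)) + 12 ≠ 0 →
        (halley p (halley p 1) = 1 ↔
          10 * b ^ 5 - 757 * b ^ 4 + 9625 * b ^ 3 - 92141 * b ^ 2 +
            388025 * b - 1830821 = 0)) := by
    intro b p hp
    refine ⟨fun z hz => ⟨halley_val b z p hp hz, (halley_hasDerivAt b z p hp hz).deriv⟩, ?_, ?_⟩
    · intro hb
      have h20 : 2 * (1:ℂ) ^ 4 + 6 * 1 ^ 2 - b * 1 + 12 ≠ 0 := by
        intro h; exact hb (by linear_combination -h)
      rw [halley_val b 1 p hp h20]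
      rw [div_eq_div_iff h20 (sub_ne_zero.mpr hb)]
      ring
    · intro hb7 hb20 hw
      have hb20' : b - 20 ≠ 0 := sub_ne_zero.mpr hb20
      have hb7' : b + 7 ≠ 0 := by intro h; exact hb7 (by linear_combination h)
      have h20 : 2 * (1:ℂ) ^ 4 + 6 * 1 ^ 2 - b * 1 + 12 ≠ 0 := by
        intro h; exact hb20 (by linear_combination -h)
      have h2 : halley p 1 = (1 + 4 * b) / (b - 20) := by
        rw [halley_val b 1 p hp h20, div_eq_div_iff h20 hb20']; ring
      rw [h2, halley_val b ((1 + 4 * b) / (b - 20)) p hp hw, div_eq_one_iff_eq hw]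
      constructor
      · intro h
        field_simp at h
        have h4 : (b - 20) ^ 12 * ((b + 7) * (10 * b ^ 5 - 757 * b ^ 4 + 9625 * b ^ 3 -
            92141 * b ^ 2 + 388025 * b - 1830821)) = 0 := by
          linear_combination (-1/3 : ℂ) * (b - 20) ^ 12 * h
        have h5 := (mul_eq_zero.mp h4).resolve_left (pow_ne_zero 12 hb20')
        exact (mul_eq_zero.mp h5).resolve_left hb7'
      · intro h
        field_simp
        linear_combination (-3 : ℂ) * (b + 7) * h
  refine ⟨main, ?_⟩
  obtain ⟨b, hq⟩ : ∃ b : ℂ, 10 * b ^ 5 - 757 * b ^ 4 + 9625 * b ^ 3 - 92141 * b ^ 2 +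
      388025 * b - 1830821 = 0 := by
    have hdeg : (Polynomial.C 10 * Polynomial.X ^ 5 - Polynomial.C 757 * Polynomial.X ^ 4 +
        Polynomial.C 9625 * Polynomial.X ^ 3 - Polynomial.C 92141 * Polynomial.X ^ 2 +
        Polynomial.C 388025 * Polynomial.X - Polynomial.C 1830821 : Polynomial ℂ).degree = 5 := by
      compute_degree!
    have hpos : (0 : WithBot ℕ) < (Polynomial.C 10 * Polynomial.X ^ 5 -
        Polynomial.C 757 * Polynomial.X ^ 4 + Polynomial.C 9625 * Polynomial.X ^ 3 -
        Polynomial.C 92141 * Polynomial.X ^ 2 + Polynomial.C 388025 * Polynomial.X -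
        Polynomial.C 1830821 : Polynomial ℂ).degree := by
      rw [hdeg]; norm_num
    obtain ⟨b, hb⟩ := Complex.exists_root hpos
    refine ⟨b, ?_⟩
    have hb' := hb
    simp only [Polynomial.IsRoot, Polynomial.eval_add, Polynomial.eval_sub,
      Polynomial.eval_mul, Polynomial.eval_pow, Polynomial.eval_C, Polynomial.eval_X] at hb'
    linear_combination hb'
  have hb7 : b ≠ -7 := by
    intro h; rw [h] at hq; norm_num at hq
  have hb20 : b ≠ 20 := by
    intro h; rw [h] at hq; norm_num at hq
  have hb20' : b - 20 ≠ 0 := sub_ne_zero.mpr hb20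
  have hb7' : b + 7 ≠ 0 := by intro h; exact hb7 (by linear_combination h)
  set p : ℂ → ℂ := fun z => z ^ 3 + 6 * z + b with hpdef
  have hp : ∀ z, p z = z ^ 3 + 6 * z + b := fun z => rfl
  set w : ℂ := (1 + 4 * b) / (b - 20) with hwdef
  have hPw : 2 * w ^ 4 + 6 * w ^ 2 - b * w + 12 ≠ 0 := by
    intro h
    rw [hwdef] at h
    field_simp at h
    have hK : (22876792454961 : ℂ) * (b - 20) ^ 3 = 0 := by
      linear_combination (294312410 - 24830251 * b + 638454 * b ^ 2 + 323762 * b ^ 3 -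
        5260 * b ^ 4) * (b - 20) ^ 3 * h + ((296539079 - 20614267 * b + 1696242 * b ^ 2 + 422066 * b ^ 3 -
        2104 * b ^ 4) * (b - 20) ^ 3) * hq
    rcases mul_eq_zero.mp hK with h' | h'
    · norm_num at h'
    · exact pow_ne_zero 3 hb20' h'
  obtain ⟨hform, hval1, hiff⟩ := main b p hp
  have h2 : halley p 1 = w := hval1 hb20
  have h3 : halley p w = 1 := by
    have := (hiff hb7 hb20 hPw).mpr hq
    rwa [h2] at this
  refine ⟨b, w, ?_, h2, h3, ?_⟩
  · intro h
    rw [hwdef, div_eq_one_iff_eq hb20'] at h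
    exact hb7 (by linear_combination h / 3)
  · have hz1ne : 2 * (1:ℂ) ^ 4 + 6 * 1 ^ 2 - b * 1 + 12 ≠ 0 := by
      intro h; exact hb20 (by linear_combination -h)
    have hd1 : HasDerivAt (halley p) 0 1 := by
      have h := halley_hasDerivAt b 1 p hp hz1ne
      convert h using 1
      norm_num
    have hdw := halley_hasDerivAt b w p hp hPw
    rw [← h2] at hdw
    have hcomp := HasDerivAt.comp 1 hdw hd1
    rw [hcomp.deriv]
    ring
end
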